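/- For pairwise orthogonal imaginary octonions p, q, r (⟨p,q⟩ = ⟨p,r⟩ = ⟨q,r⟩ = 0), one has [[ad_{X_q}, ad_{X_p}], [ad_{X_p}, ad_{X_r}]] = −4·N(p)·[ad_{X_q}, ad_{X_r}] as operators on V (the paper's relation [D_{q,p}, D_{p,r}] = −2D_{q,r} when N(p) = 1). -/

import Mathlib

noncomputable section

abbrev H := Quaternion ℝ

/-- The octonions 𝕆, as the Cayley–Dickson double of the quaternions:
pairs (a,b) of quaternions. -/
def Oct : Type := H × H

namespace Oct

instance : AddCommGroup Oct := inferInstanceAs (AddCommGroup (H × H))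
instance : Module ℝ Oct := inferInstanceAs (Module ℝ (H × H))

def mk' (a b : H) : Oct := (a, b)
def fst : Oct → H := Prod.fst
def snd : Oct → H := Prod.snd

/-- Cayley–Dickson multiplication: (a,b)·(c,d) = (ac − conj(d)b, da + b·conj(c)). -/
instance : Mul Oct :=
  ⟨fun p q => mk' (p.fst * q.fst - star q.snd * p.snd) (q.snd * p.fst + p.snd * star q.fst)⟩

instance : One Oct := ⟨mk' 1 0⟩

/-- Octonionic conjugation: conj (a,b) = (conj a, −b). -/
def conj (p : Oct) : Oct := mk' (star p.fst) (-p.snd)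

/-- The real part of an octonion, as a real scalar. -/
def re (p : Oct) : ℝ := (p.fst).re

/-- The bilinear form ⟨x,y⟩ = (x·conj(y) + y·conj(x))/2, a real scalar. -/
def oinner (p q : Oct) : ℝ := re (p * conj q + q * conj p) / 2

/-- The norm N(x) = x·conj(x), a real scalar. -/
def N (p : Oct) : ℝ := re (p * conj p)

/-- An octonion is imaginary if conj x = −x. -/
def IsIm (p : Oct) : Prop := conj p = -p

/-- The embedding of the reals into the octonions. -/
def oR (r : ℝ) : Oct := mk' (algebraMap ℝ H r) 0

end Oct

open Oct

abbrev M2 := Matrix (Fin 2) (Fin 2) Oct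

/-- The traceless Hermitian 2×2 matrix P(z,a) = !![z, a; conj a, −z]. -/
def Pm (z : ℝ) (a : Oct) : M2 := !![oR z, a; conj a, -oR z]

/-- The off-diagonal anti-Hermitian generator X_q = !![0, q; −conj q, 0]. -/
def Xm (q : Oct) : M2 := !![0, q; -conj q, 0]

/-- The diagonal generator D_q = !![q, 0; 0, −q]. -/
def Dm (q : Oct) : M2 := !![q, 0; 0, -q]

/-- The adjoint action ad_A : P ↦ AP − PA (entrywise octonion multiplication). -/
def ad (A : M2) : M2 → M2 := fun P => A * P - P * A

/-- The bracket of operators, [S,T] = S∘T − T∘S. -/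
def br (S T : M2 → M2) : M2 → M2 := fun P => S (T P) - T (S P)

-- component lemmas
lemma fst_eq (x : Oct) : Oct.fst x = x.1 := rfl
lemma snd_eq (x : Oct) : Oct.snd x = x.2 := rfl
lemma omul_fst (x y : Oct) : (x * y).1 = x.1 * y.1 - star y.2 * x.2 := rfl
lemma omul_snd (x y : Oct) : (x * y).2 = y.2 * x.1 + x.2 * star y.1 := rfl
lemma oconj_fst (x : Oct) : (conj x).1 = star x.1 := rfl
lemma oconj_snd (x : Oct) : (conj x).2 = -x.2 := rfl
lemma oadd_fst (x y : Oct) : (x + y).1 = x.1 + y.1 := rfl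
lemma oadd_snd (x y : Oct) : (x + y).2 = x.2 + y.2 := rfl
lemma osub_fst (x y : Oct) : (x - y).1 = x.1 - y.1 := rfl
lemma osub_snd (x y : Oct) : (x - y).2 = x.2 - y.2 := rfl
lemma oneg_fst (x : Oct) : (-x).1 = -x.1 := rfl
lemma oneg_snd (x : Oct) : (-x).2 = -x.2 := rfl
lemma osmul_fst (c : ℝ) (x : Oct) : (c • x).1 = c • x.1 := rfl
lemma osmul_snd (c : ℝ) (x : Oct) : (c • x).2 = c • x.2 := rfl
lemma ozero_fst : (0 : Oct).1 = 0 := rfl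
lemma ozero_snd : (0 : Oct).2 = 0 := rfl
lemma oR_fst (r : ℝ) : (oR r).1 = algebraMap ℝ H r := rfl
lemma oR_snd (r : ℝ) : (oR r).2 = 0 := rfl

lemma isIm_re (x : Oct) (hx : IsIm x) : x.1.re = 0 := by
  have h : (conj x).1 = (-x).1 := by rw [hx]
  rw [oconj_fst, oneg_fst] at h
  have := congrArg QuaternionAlgebra.re h
  simp at this
  linarith

lemma oinner_eq (x y : Oct) : oinner x y =
    x.1.re * y.1.re + x.1.imI * y.1.imI + x.1.imJ * y.1.imJ + x.1.imK * y.1.imK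
    + x.2.re * y.2.re + x.2.imI * y.2.imI + x.2.imJ * y.2.imJ + x.2.imK * y.2.imK := by
  simp [oinner, Oct.re, fst_eq, oadd_fst, omul_fst, oconj_fst, oconj_snd, Quaternion.re_mul]
  ring

lemma oinner_comm (x y : Oct) : oinner x y = oinner y x := by
  simp [oinner_eq]; ring

lemma oinner_self (x : Oct) : oinner x x = N x := by
  simp [oinner_eq, N, Oct.re, fst_eq, omul_fst, oconj_fst, oconj_snd, Quaternion.re_mul]
  ring

lemma oinner_smul_right (c : ℝ) (x y : Oct) : oinner x (c • y) = c * oinner x y := by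
  simp [oinner_eq, osmul_fst, osmul_snd, Quaternion.re_smul]; ring

lemma oinner_sub_right (x y z : Oct) : oinner x (y - z) = oinner x y - oinner x z := by
  simp [oinner_eq, osub_fst, osub_snd]; ring

lemma oct_ext_iff (x y : Oct) : x = y ↔ x.1 = y.1 ∧ x.2 = y.2 := Prod.ext_iff

set_option maxHeartbeats 2000000 in
lemma adX (x : Oct) (hx : IsIm x) (z : ℝ) (a : Oct) :
    ad (Xm x) (Pm z a) = Pm (2 * oinner x a) ((-2*z) • x) := by
  have hre : x.1.re = 0 := isIm_re x hx
  ext i j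
  fin_cases i <;> fin_cases j <;>
  · simp only [ad, Xm, Pm, Matrix.sub_apply, Matrix.mul_apply, Fin.sum_univ_two,
      Matrix.cons_val', Matrix.cons_val_zero, Matrix.cons_val_one, Matrix.head_cons,
      Matrix.head_fin_const, Matrix.empty_val', Matrix.cons_val_fin_one]
    rw [oct_ext_iff]
    constructor <;>
    · apply Quaternion.ext <;>
      · simp [fst_eq, snd_eq, omul_fst, omul_snd,
          oconj_fst, oconj_snd, osub_fst, osub_snd, oadd_fst, oadd_snd, oneg_fst, oneg_snd,
          osmul_fst, osmul_snd, ozero_fst, ozero_snd, oR_fst, oR_snd, oinner_eq,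
          Quaternion.re_mul, Quaternion.imI_mul, Quaternion.imJ_mul, Quaternion.imK_mul, hre, Quaternion.re_zero, Quaternion.imI_zero,
          Quaternion.imJ_zero, Quaternion.imK_zero] <;>
        ring

lemma Pm_congr {z1 z2 : ℝ} {a1 a2 : Oct} (h1 : z1 = z2) (h2 : a1 = a2) :
    Pm z1 a1 = Pm z2 a2 := by rw [h1, h2]

lemma oR_sub (z1 z2 : ℝ) : oR (z1 - z2) = oR z1 - oR z2 := by
  rw [oct_ext_iff]; simp [oR_fst, oR_snd, osub_fst, osub_snd, map_sub]

lemma conj_sub (a1 a2 : Oct) : conj (a1 - a2) = conj a1 - conj a2 := by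
  rw [oct_ext_iff]
  simp [oconj_fst, oconj_snd, osub_fst, osub_snd, star_sub, neg_sub]
  abel

lemma oR_smul (c z : ℝ) : oR (c * z) = c • oR z := by
  rw [oct_ext_iff]
  simp [oR_fst, oR_snd, osmul_fst, osmul_snd, Algebra.algebraMap_eq_smul_one, smul_smul]

lemma conj_smul (c : ℝ) (a : Oct) : conj (c • a) = c • conj a := by
  rw [oct_ext_iff]
  simp [oconj_fst, oconj_snd, osmul_fst, osmul_snd, star_smul]

lemma Pm_sub (z1 z2 : ℝ) (a1 a2 : Oct) :
    Pm z1 a1 - Pm z2 a2 = Pm (z1 - z2) (a1 - a2) := by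
  ext i j
  fin_cases i <;> fin_cases j <;> simp [Pm, oR_sub, conj_sub] <;> abel

lemma Pm_smul (c : ℝ) (z : ℝ) (a : Oct) :
    c • Pm z a = Pm (c * z) (c • a) := by
  ext i j
  fin_cases i <;> fin_cases j <;> simp [Pm, oR_smul, conj_smul]

lemma brXX (x y : Oct) (hx : IsIm x) (hy : IsIm y) (z : ℝ) (a : Oct) :
    br (ad (Xm x)) (ad (Xm y)) (Pm z a)
      = Pm 0 ((4 * oinner x a) • y - (4 * oinner y a) • x) := by
  show ad (Xm x) (ad (Xm y) (Pm z a)) - ad (Xm y) (ad (Xm x) (Pm z a)) = _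
  rw [adX y hy, adX x hx, adX x hx, adX y hy, Pm_sub]
  apply Pm_congr
  · rw [oinner_smul_right, oinner_smul_right, oinner_comm x y]; ring
  · match_scalars <;> ring

/-- For pairwise orthogonal imaginary octonions p, q, r:
[[ad_{X_q}, ad_{X_p}], [ad_{X_p}, ad_{X_r}]] = −4·N(p)·[ad_{X_q}, ad_{X_r}]
as operators on V (the relation [D_{q,p}, D_{p,r}] = −2D_{q,r} when N(p) = 1). -/
theorem bracket_Dqp_Dpr (p q r : Oct) (hp : IsIm p) (hq : IsIm q) (hr : IsIm r)
    (hpq : oinner p q = 0) (hpr : oinner p r = 0) (hqr : oinner q r = 0) :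
    ∀ (z : ℝ) (a : Oct),
      br (br (ad (Xm q)) (ad (Xm p))) (br (ad (Xm p)) (ad (Xm r))) (Pm z a)
        = ((-4) * N p) • br (ad (Xm q)) (ad (Xm r)) (Pm z a) := by
  have hqp : oinner q p = 0 := by rw [oinner_comm]; exact hpq
  have hrp : oinner r p = 0 := by rw [oinner_comm]; exact hpr
  have hrq : oinner r q = 0 := by rw [oinner_comm]; exact hqr
  intro z a
  show br (ad (Xm q)) (ad (Xm p)) (br (ad (Xm p)) (ad (Xm r)) (Pm z a))
      - br (ad (Xm p)) (ad (Xm r)) (br (ad (Xm q)) (ad (Xm p)) (Pm z a))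
      = ((-4) * N p) • br (ad (Xm q)) (ad (Xm r)) (Pm z a)
  rw [brXX p r hp hr, brXX q p hq hp, brXX q p hq hp, brXX p r hp hr, Pm_sub,
    brXX q r hq hr, Pm_smul]
  apply Pm_congr
  · ring
  · simp only [oinner_sub_right, oinner_smul_right, hpq, hpr, hqr, hqp, hrp, hrq, oinner_self]
    match_scalars <;> ring
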